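/- For every β > 0, 2β·(∑_{n∈ℤ} n² e^{−βn²}) < ∑_{n∈ℤ} e^{−βn²}; equivalently, ∑_{n∈ℤ} (2βn² − 1)·e^{−βn²} < 0. -/

import Mathlib

open Real

lemma nat_summable (k : ℕ) {c : ℝ} (hc : 0 < c) :
    Summable (fun n : ℕ => (n : ℝ) ^ k * Real.exp (-c * (n : ℝ) ^ 2)) := by
  have hr : ‖Real.exp (-c)‖ < 1 := by
    rw [Real.norm_eq_abs, abs_of_pos (Real.exp_pos _)]
    exact Real.exp_lt_one_iff.2 (by linarith)
  refine Summable.of_nonneg_of_le (fun n => by positivity) (fun n => ?_)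
    (summable_pow_mul_geometric_of_norm_lt_one k hr)
  rw [← Real.exp_nat_mul]
  have hn : (n : ℝ) ≤ (n : ℝ) ^ 2 := by
    have := Nat.le_self_pow (two_ne_zero) n
    exact_mod_cast this
  have : Real.exp (-c * (n : ℝ) ^ 2) ≤ Real.exp ((n : ℝ) * -c) := by
    apply Real.exp_le_exp.2; nlinarith
  have h0 : (0:ℝ) ≤ (n:ℝ)^k := by positivity
  nlinarith [Real.exp_pos (-c * (n:ℝ)^2)]

lemma int_summable0 {c : ℝ} (hc : 0 < c) :
    Summable (fun n : ℤ => Real.exp (-c * (n : ℝ) ^ 2)) := by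
  have h := nat_summable 0 hc
  simp only [pow_zero, one_mul] at h
  apply Summable.of_nat_of_neg <;> simpa using h

lemma int_summable2 {c : ℝ} (hc : 0 < c) :
    Summable (fun n : ℤ => (n : ℝ) ^ 2 * Real.exp (-c * (n : ℝ) ^ 2)) := by
  have h := nat_summable 2 hc
  apply Summable.of_nat_of_neg <;> simpa using h

lemma theta_hasDerivAt {β : ℝ} (hβ : 0 < β) :
    HasDerivAt (fun x : ℝ => ∑' n : ℤ, Real.exp (-x * (n : ℝ) ^ 2))
      (∑' n : ℤ, -((n : ℝ) ^ 2) * Real.exp (-β * (n : ℝ) ^ 2)) β := by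
  refine hasDerivAt_tsum_of_isPreconnected
    (u := fun n : ℤ => (n : ℝ) ^ 2 * Real.exp (-(β/2) * (n : ℝ) ^ 2))
    (g := fun n x => Real.exp (-x * (n : ℝ) ^ 2))
    (g' := fun n x => -((n : ℝ) ^ 2) * Real.exp (-x * (n : ℝ) ^ 2))
    (int_summable2 (by linarith)) isOpen_Ioi isPreconnected_Ioi
    (fun n y _ => ?_) (fun n y hy => ?_)
    (show β ∈ Set.Ioi (β/2) by simp; linarith) (int_summable0 hβ)
    (show β ∈ Set.Ioi (β/2) by simp; linarith)
  · have h1 : HasDerivAt (fun x : ℝ => -x * (n : ℝ) ^ 2) (-((n : ℝ) ^ 2)) y := by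
      simpa using ((hasDerivAt_id y).neg.mul_const ((n : ℝ) ^ 2))
    have := (Real.hasDerivAt_exp (-y * (n : ℝ) ^ 2)).comp y h1
    simpa [mul_comm, Function.comp_def] using this
  · have hy' : β / 2 ≤ y := le_of_lt hy
    have hn2 : (0:ℝ) ≤ (n : ℝ) ^ 2 := sq_nonneg _
    rw [Real.norm_eq_abs, abs_mul, abs_neg, abs_of_nonneg hn2,
      abs_of_pos (Real.exp_pos _)]
    exact mul_le_mul_of_nonneg_left (Real.exp_le_exp.2 (by nlinarith)) hn2

lemma jacobi {x : ℝ} (hx : 0 < x) :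
    Real.sqrt x * ∑' n : ℤ, Real.exp (-x * (n : ℝ) ^ 2)
      = Real.sqrt π * ∑' n : ℤ, Real.exp (-(π ^ 2 / x) * (n : ℝ) ^ 2) := by
  have hπ := Real.pi_pos
  have ha : 0 < x / π := div_pos hx hπ
  have h := Real.tsum_exp_neg_mul_int_sq ha
  have c1 : -π * (x / π) = -x := by field_simp
  have c2 : -π / (x / π) = -(π ^ 2 / x) := by
    rw [div_div_eq_mul_div, neg_mul, neg_div, sq]
  rw [c1, c2] at h
  rw [h, ← Real.sqrt_eq_rpow, Real.sqrt_div hx.le]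
  have h1 : Real.sqrt x ≠ 0 := (Real.sqrt_pos.2 hx).ne'
  have h2 : Real.sqrt π ≠ 0 := (Real.sqrt_pos.2 hπ).ne'
  field_simp

theorem stmt13 (β : ℝ) (hβ : 0 < β) :
    2 * β * ∑' n : ℤ, (n:ℝ)^2 * Real.exp (-β * (n:ℝ)^2)
      < ∑' n : ℤ, Real.exp (-β * (n:ℝ)^2) ∧
    ∑' n : ℤ, (2 * β * (n:ℝ)^2 - 1) * Real.exp (-β * (n:ℝ)^2) < 0 := by
  have hπ := Real.pi_pos
  set S0 := ∑' n : ℤ, Real.exp (-β * (n:ℝ)^2) with hS0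
  set S2 := ∑' n : ℤ, (n:ℝ)^2 * Real.exp (-β * (n:ℝ)^2) with hS2
  have hγ : 0 < π ^ 2 / β := by positivity
  set T2 := ∑' n : ℤ, (n:ℝ)^2 * Real.exp (-(π ^ 2 / β) * (n:ℝ)^2) with hT2
  have hT2pos : 0 < T2 := by
    refine Summable.tsum_pos (int_summable2 hγ) (fun n => by positivity) 1 ?_
    norm_num [Real.exp_pos]
  -- derivative of G = √x * θ(x)
  have hfβ : HasDerivAt (fun x : ℝ => ∑' n : ℤ, Real.exp (-x * (n : ℝ) ^ 2)) (-S2) β := by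
    have := theta_hasDerivAt hβ
    rwa [show (∑' n : ℤ, -((n : ℝ) ^ 2) * Real.exp (-β * (n : ℝ) ^ 2)) = -S2 by
      rw [hS2, ← tsum_neg]; congr 1; funext n; ring] at this
  have hs : 0 < Real.sqrt β := Real.sqrt_pos.2 hβ
  have hG : HasDerivAt (fun x : ℝ => Real.sqrt x * ∑' n : ℤ, Real.exp (-x * (n : ℝ) ^ 2))
      (1 / (2 * Real.sqrt β) * S0 + Real.sqrt β * (-S2)) β :=
    (Real.hasDerivAt_sqrt hβ.ne').mul hfβ
  -- derivative of F = √π * θ(π²/x)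
  have hinv : HasDerivAt (fun x : ℝ => π ^ 2 / x) (π ^ 2 * -(β ^ 2)⁻¹) β := by
    simpa [div_eq_mul_inv] using (hasDerivAt_inv hβ.ne').const_mul (π ^ 2)
  have hfγ : HasDerivAt (fun x : ℝ => ∑' n : ℤ, Real.exp (-x * (n : ℝ) ^ 2)) (-T2) (π ^ 2 / β) := by
    have := theta_hasDerivAt hγ
    rwa [show (∑' n : ℤ, -((n : ℝ) ^ 2) * Real.exp (-(π ^ 2 / β) * (n : ℝ) ^ 2)) = -T2 by
      rw [hT2, ← tsum_neg]; congr 1; funext n; ring] at this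
  have hF : HasDerivAt (fun x : ℝ => Real.sqrt π * ∑' n : ℤ, Real.exp (-(π ^ 2 / x) * (n : ℝ) ^ 2))
      (Real.sqrt π * (-T2 * (π ^ 2 * -(β ^ 2)⁻¹))) β := by
    have hcomp := HasDerivAt.comp β hfγ hinv
    exact hcomp.const_mul (Real.sqrt π)
  have hGF : (fun x : ℝ => Real.sqrt x * ∑' n : ℤ, Real.exp (-x * (n : ℝ) ^ 2))
      =ᶠ[nhds β] (fun x : ℝ => Real.sqrt π * ∑' n : ℤ, Real.exp (-(π ^ 2 / x) * (n : ℝ) ^ 2)) := by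
    filter_upwards [Ioi_mem_nhds hβ] with x hx
    exact jacobi hx
  have hG' : HasDerivAt (fun x : ℝ => Real.sqrt x * ∑' n : ℤ, Real.exp (-x * (n : ℝ) ^ 2))
      (Real.sqrt π * (-T2 * (π ^ 2 * -(β ^ 2)⁻¹))) β :=
    hF.congr_of_eventuallyEq hGF
  have heq := hG.unique hG'
  have hR : 0 < Real.sqrt π * (-T2 * (π ^ 2 * -(β ^ 2)⁻¹)) := by
    have : Real.sqrt π * (-T2 * (π ^ 2 * -(β ^ 2)⁻¹)) = Real.sqrt π * T2 * (π ^ 2 * (β ^ 2)⁻¹) := by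
      ring
    rw [this]
    have := Real.sqrt_pos.2 hπ
    positivity
  set R := Real.sqrt π * (-T2 * (π ^ 2 * -(β ^ 2)⁻¹)) with hRdef
  have hsq : Real.sqrt β * Real.sqrt β = β := Real.mul_self_sqrt hβ.le
  have key : 2 * β * S2 < S0 := by
    have h1 : 1 / (2 * Real.sqrt β) * S0 = R + Real.sqrt β * S2 := by linarith
    have h2 : S0 = 2 * Real.sqrt β * (R + Real.sqrt β * S2) := by
      rw [← h1]; field_simp
    have h3 : S0 = 2 * Real.sqrt β * R + 2 * β * S2 := by
      have e : 2 * Real.sqrt β * (R + Real.sqrt β * S2)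
          = 2 * Real.sqrt β * R + 2 * (Real.sqrt β * Real.sqrt β) * S2 := by ring
      rw [h2, e, hsq]
    linarith [mul_pos hs hR]
  refine ⟨key, ?_⟩
  have hsum2 : Summable (fun n : ℤ => 2 * β * ((n:ℝ)^2 * Real.exp (-β * (n:ℝ)^2))) :=
    (int_summable2 hβ).mul_left _
  have hsum0 := int_summable0 hβ
  have hrw : (fun n : ℤ => (2 * β * (n:ℝ)^2 - 1) * Real.exp (-β * (n:ℝ)^2))
      = fun n : ℤ => 2 * β * ((n:ℝ)^2 * Real.exp (-β * (n:ℝ)^2)) - Real.exp (-β * (n:ℝ)^2) := by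
    funext n; ring
  rw [hrw, Summable.tsum_sub hsum2 hsum0, tsum_mul_left]
  linarith
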